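/- Let M be an infinite complete metric space that is discrete but not uniformly discrete. Then SNA(M) contains a closed linear subspace of Lip_0(M) linearly isometric to c_0. -/

import Mathlib

open Metric Set Filter Topology ZeroAtInfty

/-- The Lipschitz norm (best Lipschitz constant, as a supremum of difference quotients). -/
noncomputable def lipNorm {M : Type*} [MetricSpace M] (f : M → ℝ) : ℝ :=
  sSup {r : ℝ | ∃ x y : M, x ≠ y ∧ r = |f x - f y| / dist x y}

/-- `f` strongly attains its Lipschitz norm. -/
def StronglyAttains {M : Type*} [MetricSpace M] (f : M → ℝ) : Prop :=
  ∃ x y : M, x ≠ y ∧ (f x - f y) / dist x y = lipNorm f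

/-- `f` is Lipschitz with (real) constant `K`. -/
def IsLipWith {M : Type*} [MetricSpace M] (K : ℝ) (f : M → ℝ) : Prop :=
  ∀ x y : M, |f x - f y| ≤ K * dist x y

/-- Distance between two subsets of a metric space. -/
noncomputable def setDist {M : Type*} [MetricSpace M] (A B : Set M) : ℝ :=
  sInf {r : ℝ | ∃ a ∈ A, ∃ b ∈ B, r = dist a b}

/-- A subset is uniformly discrete. -/
def UnifDiscreteOn {M : Type*} [MetricSpace M] (s : Set M) : Prop :=
  ∃ r > 0, ∀ x ∈ s, ∀ y ∈ s, x ≠ y → r ≤ dist x y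

/-- `R(x)`: the supremum of radii `R ≥ 0` with `closedBall x R = {x}`. -/
noncomputable def isolRad {M : Type*} [MetricSpace M] (x : M) : ℝ :=
  sSup {R : ℝ | 0 ≤ R ∧ Metric.closedBall x R = {x}}

set_option linter.unusedSectionVars false

section AuxSNA

variable {M : Type*} [MetricSpace M]

private lemma compl_pair_nonempty [Infinite M] (u v : M) : (({u, v} : Set M)ᶜ).Nonempty :=
  ((Set.toFinite {u, v}).infinite_compl).nonempty

private lemma compl_single_nonempty [Infinite M] (u : M) : (({u} : Set M)ᶜ).Nonempty :=
  ((Set.toFinite {u}).infinite_compl).nonempty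

private lemma isol_pos [Infinite M] (hdisc : ∀ x : M, ∃ r > (0:ℝ), ball x r = {x}) (p : M) :
    0 < infDist p ({p}ᶜ : Set M) := by
  obtain ⟨r, hr, hb⟩ := hdisc p
  by_contra h
  push_neg at h
  have hlt : infDist p ({p}ᶜ : Set M) < r := lt_of_le_of_lt h hr
  obtain ⟨y, hy, hd⟩ := (infDist_lt_iff (compl_single_nonempty p)).1 hlt
  have : y ∈ ball p r := by rwa [mem_ball, dist_comm]
  rw [hb] at this
  exact hy this

/-- Key completeness lemma: there are pairs of arbitrarily small distance which is less than
the sum of the two distances to the complement of the pair. -/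
private lemma pair_lemma [Infinite M] [CompleteSpace M]
    (hdisc : ∀ x : M, ∃ r > (0:ℝ), ball x r = {x})
    (hnud : ¬ UnifDiscreteOn (Set.univ : Set M)) {ε : ℝ} (hε : 0 < ε) :
    ∃ u v : M, u ≠ v ∧ dist u v < ε ∧
      dist u v < infDist u (({u, v} : Set M)ᶜ) + infDist v (({u, v} : Set M)ᶜ) := by
  by_contra hcon
  push_neg at hcon
  have step : ∀ p : M × M, p.1 ≠ p.2 → dist p.1 p.2 < ε →
      ∃ q : M × M, q.1 ≠ q.2 ∧ dist q.1 q.2 ≤ 3/4 * dist p.1 p.2 ∧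
        dist p.1 q.1 ≤ dist p.1 p.2 := by
    rintro ⟨u, v⟩ hne hlt
    have hd : 0 < dist u v := dist_pos.2 hne
    have hsum := hcon u v hne hlt
    have hmin : infDist u (({u,v}:Set M)ᶜ) ≤ dist u v / 2 ∨
        infDist v (({u,v}:Set M)ᶜ) ≤ dist u v / 2 := by
      by_contra hno; push_neg at hno
      have := hno.1; have := hno.2; linarith
    rcases hmin with h | h
    · have h2 : infDist u (({u,v}:Set M)ᶜ) < 3/4 * dist u v := by linarith
      obtain ⟨w, hw, hdw⟩ := (infDist_lt_iff (compl_pair_nonempty u v)).1 h2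
      have hwne : u ≠ w := by
        intro h'; exact hw (by simp [← h'])
      exact ⟨(u, w), hwne, hdw.le, by simp [dist_self, dist_nonneg]⟩
    · have h2 : infDist v (({u,v}:Set M)ᶜ) < 3/4 * dist u v := by linarith
      obtain ⟨w, hw, hdw⟩ := (infDist_lt_iff (compl_pair_nonempty u v)).1 h2
      have hwne : v ≠ w := by
        intro h'; exact hw (by simp [← h'])
      exact ⟨(v, w), hwne, hdw.le, le_refl _⟩
  -- initial pair
  have h0 : ∃ x y : M, x ≠ y ∧ dist x y < ε := by
    rw [UnifDiscreteOn] at hnud; push_neg at hnud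
    obtain ⟨x, -, y, -, hxy, hlt⟩ := hnud ε hε
    exact ⟨x, y, hxy, hlt⟩
  obtain ⟨x0, y0, hne0, hlt0⟩ := h0
  have hex : ∀ p : {p : M × M // p.1 ≠ p.2 ∧ dist p.1 p.2 < ε},
      ∃ q : {p : M × M // p.1 ≠ p.2 ∧ dist p.1 p.2 < ε},
        dist q.1.1 q.1.2 ≤ 3/4 * dist p.1.1 p.1.2 ∧ dist p.1.1 q.1.1 ≤ dist p.1.1 p.1.2 := by
    rintro ⟨p, hp1, hp2⟩
    obtain ⟨q, hq1, hq2, hq3⟩ := step p hp1 hp2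
    have hd0 : (0:ℝ) ≤ dist p.1 p.2 := dist_nonneg
    exact ⟨⟨q, hq1, by nlinarith⟩, hq2, hq3⟩
  choose next hnext1 hnext2 using hex
  let T : ℕ → {p : M × M // p.1 ≠ p.2 ∧ dist p.1 p.2 < ε} :=
    fun n => Nat.rec ⟨(x0, y0), hne0, hlt0⟩ (fun _ prev => next prev) n
  have hTsucc : ∀ n, T (n+1) = next (T n) := fun n => rfl
  have hgeo : ∀ n, dist (T n).1.1 (T n).1.2 ≤ (3/4)^n * dist x0 y0 := by
    intro n
    induction n with
    | zero => simp [T]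
    | succ k ih =>
        have h1 := hnext1 (T k)
        rw [← hTsucc k] at h1
        calc dist (T (k+1)).1.1 (T (k+1)).1.2 ≤ 3/4 * dist (T k).1.1 (T k).1.2 := h1
        _ ≤ 3/4 * ((3/4)^k * dist x0 y0) := by nlinarith
        _ = (3/4)^(k+1) * dist x0 y0 := by ring
  have hstep2 : ∀ n, dist (T n).1.1 (T (n+1)).1.1 ≤ dist x0 y0 * (3/4)^n := by
    intro n
    have h2 := hnext2 (T n)
    rw [← hTsucc n] at h2
    calc dist (T n).1.1 (T (n+1)).1.1 ≤ dist (T n).1.1 (T n).1.2 := h2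
    _ ≤ (3/4)^n * dist x0 y0 := hgeo n
    _ = dist x0 y0 * (3/4)^n := by ring
  have hcauchy : CauchySeq (fun n => (T n).1.1) :=
    cauchySeq_of_le_geometric (3/4) (dist x0 y0) (by norm_num) hstep2
  obtain ⟨x, hx⟩ := cauchySeq_tendsto_of_complete hcauchy
  obtain ⟨r, hr, hb⟩ := hdisc x
  obtain ⟨N1, hN1⟩ := Metric.tendsto_atTop.1 hx (r/2) (by linarith)
  have htend : Tendsto (fun n : ℕ => (3/4:ℝ)^n * dist x0 y0) atTop (𝓝 0) := by
    have := tendsto_pow_atTop_nhds_zero_of_lt_one (by norm_num : (0:ℝ) ≤ 3/4) (by norm_num)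
    simpa using this.mul_const (dist x0 y0)
  obtain ⟨N2, hN2⟩ := (Metric.tendsto_atTop.1 htend (r/2) (by linarith))
  set n := max N1 N2
  have ha : dist ((T n).1.1) x < r/2 := hN1 n (le_max_left _ _)
  have hd2 : dist (T n).1.1 (T n).1.2 < r/2 := by
    have := hN2 n (le_max_right _ _)
    rw [Real.dist_eq, sub_zero] at this
    calc dist (T n).1.1 (T n).1.2 ≤ (3/4)^n * dist x0 y0 := hgeo n
    _ ≤ |(3/4:ℝ)^n * dist x0 y0| := le_abs_self _
    _ < r/2 := this
  have hax : (T n).1.1 = x := by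
    have : (T n).1.1 ∈ ball x r := by rw [mem_ball]; linarith
    rw [hb] at this; exact this
  have hbx : (T n).1.2 = x := by
    have hd3 : dist (T n).1.2 x ≤ dist (T n).1.2 (T n).1.1 + dist (T n).1.1 x := dist_triangle _ _ _
    rw [dist_comm (T n).1.2 (T n).1.1] at hd3
    have : (T n).1.2 ∈ ball x r := by rw [mem_ball]; linarith
    rw [hb] at this; exact this
  exact (T n).2.1 (hax.trans hbx.symm)


section Chunk2

variable {M : Type*} [MetricSpace M]

private noncomputable def R2 (p : M × M) (x : M) : ℝ := infDist x (({p.1, p.2} : Set M)ᶜ)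

private def predPair (p : M × M) : Prop :=
  p.1 ≠ p.2 ∧ dist p.1 p.2 < R2 p p.1 + R2 p p.2

private noncomputable def Apair (p : M × M) : ℝ :=
  dist p.1 p.2 * R2 p p.1 / (R2 p p.1 + R2 p p.2)

private noncomputable def Marg (p : M × M) : ℝ :=
  min (R2 p p.1 - Apair p) (R2 p p.2 - (dist p.1 p.2 - Apair p))

private lemma pred_facts [Infinite M] (hdisc : ∀ x : M, ∃ r > (0:ℝ), ball x r = {x})
    (p : M × M) (hp : predPair p) :
    0 < dist p.1 p.2 ∧ 0 < R2 p p.1 ∧ 0 < R2 p p.2 ∧ 0 ≤ Apair p ∧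
      Apair p ≤ dist p.1 p.2 ∧ Apair p < R2 p p.1 ∧
      dist p.1 p.2 - Apair p < R2 p p.2 ∧ 0 < Marg p := by
  obtain ⟨hne, hsum⟩ := hp
  have hd : 0 < dist p.1 p.2 := dist_pos.2 hne
  have hsub1 : (({p.1, p.2} : Set M)ᶜ) ⊆ ({p.1}ᶜ : Set M) :=
    compl_subset_compl.2 (Set.singleton_subset_iff.2 (Set.mem_insert _ _))
  have hsub2 : (({p.1, p.2} : Set M)ᶜ) ⊆ ({p.2}ᶜ : Set M) :=
    compl_subset_compl.2 (Set.singleton_subset_iff.2 (by simp))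
  have ha : 0 < R2 p p.1 :=
    lt_of_lt_of_le (isol_pos hdisc p.1)
      (infDist_le_infDist_of_subset hsub1 (compl_pair_nonempty _ _))
  have hb : 0 < R2 p p.2 :=
    lt_of_lt_of_le (isol_pos hdisc p.2)
      (infDist_le_infDist_of_subset hsub2 (compl_pair_nonempty _ _))
  have hab : 0 < R2 p p.1 + R2 p p.2 := by linarith
  have hA0 : 0 ≤ Apair p := by
    unfold Apair; positivity
  have hAd : Apair p ≤ dist p.1 p.2 := by
    unfold Apair; rw [div_le_iff₀ hab]; nlinarith
  have hAa : Apair p < R2 p p.1 := by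
    unfold Apair; rw [div_lt_iff₀ hab]; nlinarith
  have hAb : dist p.1 p.2 - Apair p < R2 p p.2 := by
    have heq : dist p.1 p.2 - Apair p = dist p.1 p.2 * R2 p p.2 / (R2 p p.1 + R2 p p.2) := by
      unfold Apair; field_simp; ring
    rw [heq, div_lt_iff₀ hab]; nlinarith
  exact ⟨hd, ha, hb, hA0, hAd, hAa, hAb, lt_min (by linarith) (by linarith)⟩

private lemma aux_main [Infinite M] [CompleteSpace M]
    (hdisc : ∀ x : M, ∃ r > (0:ℝ), ball x r = {x})
    (hnud : ¬ UnifDiscreteOn (Set.univ : Set M)) (z : M) :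
    ∃ u v : ℕ → M, ∃ A B : ℕ → ℝ,
      (∀ n, u n ≠ v n) ∧ (∀ n, u n ≠ z) ∧ (∀ n, v n ≠ z) ∧
      (∀ m n, m ≠ n → u m ≠ u n ∧ u m ≠ v n ∧ v m ≠ v n) ∧
      (∀ n, 0 ≤ A n) ∧ (∀ n, B n ≤ 0) ∧ (∀ n, A n - B n = dist (u n) (v n)) ∧
      (∀ n, A n ≤ infDist (u n) (({u n, v n} : Set M)ᶜ)) ∧
      (∀ n, -B n ≤ infDist (v n) (({u n, v n} : Set M)ᶜ)) ∧
      (∀ m n, m < n → dist (u n) (v n) + A m ≤ infDist (u m) (({u m, v m} : Set M)ᶜ) ∧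
        dist (u n) (v n) + -(B m) ≤ infDist (v m) (({u m, v m} : Set M)ᶜ)) := by
  classical
  have hstep : ∀ e : ℝ, 0 < e → ∃ p : M × M, predPair p ∧ dist p.1 p.2 < e := by
    intro e he
    obtain ⟨a, b, h1, h2, h3⟩ := pair_lemma hdisc hnud he
    exact ⟨(a, b), ⟨h1, h3⟩, h2⟩
  set bnd : (ℕ → M × M) → ℕ → ℝ := fun g n =>
    (Finset.range (n+1)).inf' ⟨n, Finset.self_mem_range_succ n⟩
      (fun m => if m = n then infDist z ({z}ᶜ : Set M)
        else min (Marg (g m))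
          (min (infDist (g m).1 ({(g m).1}ᶜ : Set M)) (infDist (g m).2 ({(g m).2}ᶜ : Set M))))
    with hbnd_def
  set next : (ℕ → M × M) → ℕ → M × M := fun g n =>
    if h : 0 < bnd g n then (hstep _ h).choose else (z, z) with hnext_def
  set G : ℕ → ℕ → M × M := fun n =>
    Nat.rec (fun _ => (z, z)) (fun k gk => Function.update gk k (next gk k)) n with hG_def
  have hGsucc : ∀ k, G (k+1) = Function.update (G k) k (next (G k) k) := fun k => rfl
  set P : ℕ → M × M := fun n => G (n+1) n with hP_def
  have agree : ∀ k n, n < k → G k n = P n := by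
    intro k
    induction k with
    | zero => intro n hn; omega
    | succ k ih =>
        intro n hn
        rcases Nat.lt_succ_iff_lt_or_eq.1 hn with h | h
        · rw [hGsucc k, Function.update_of_ne (Nat.ne_of_lt h), ih n h]
        · subst h; rfl
  have hinv : ∀ n, predPair (P n) ∧ dist (P n).1 (P n).2 < bnd (G n) n := by
    intro n
    induction n using Nat.strong_induction_on with
    | _ n ih =>
      have hpos : 0 < bnd (G n) n := by
        rw [hbnd_def]
        refine (Finset.lt_inf'_iff _).2 ?_
        intro m hm
        rcases eq_or_ne m n with h | h
        · rw [if_pos h]; exact isol_pos hdisc z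
        · have hmn : m < n := by
            have := Finset.mem_range.1 hm; omega
          rw [if_neg h, agree n m hmn]
          obtain ⟨hp, -⟩ := ih m hmn
          obtain ⟨-, -, -, -, -, -, -, hM⟩ := pred_facts hdisc _ hp
          exact lt_min hM (lt_min (isol_pos hdisc _) (isol_pos hdisc _))
      have hPn : P n = (hstep _ hpos).choose := by
        rw [hP_def]
        show G (n+1) n = _
        rw [hGsucc n, Function.update_self, hnext_def]
        exact dif_pos hpos
      rw [hPn]
      obtain ⟨h1, h2⟩ := (hstep _ hpos).choose_spec
      exact ⟨h1, h2⟩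
  have hbnd_le : ∀ n m, m < n → bnd (G n) n ≤ min (Marg (P m))
      (min (infDist (P m).1 ({(P m).1}ᶜ : Set M)) (infDist (P m).2 ({(P m).2}ᶜ : Set M))) := by
    intro n m hmn
    rw [hbnd_def]
    have hm : m ∈ Finset.range (n+1) := Finset.mem_range.2 (by omega)
    calc _ ≤ _ := Finset.inf'_le _ hm
    _ = _ := by rw [if_neg (Nat.ne_of_lt hmn), agree n m hmn]
  have hbnd_z : ∀ n, bnd (G n) n ≤ infDist z ({z}ᶜ : Set M) := by
    intro n
    rw [hbnd_def]
    calc _ ≤ _ := Finset.inf'_le _ (Finset.self_mem_range_succ n)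
    _ = _ := by rw [if_pos rfl]
  -- now define everything
  refine ⟨fun n => (P n).1, fun n => (P n).2, fun n => Apair (P n),
    fun n => Apair (P n) - dist (P n).1 (P n).2, ?_, ?_, ?_, ?_, ?_, ?_, ?_, ?_, ?_, ?_⟩
  · exact fun n => (hinv n).1.1
  · -- u n ≠ z
    intro n h
    have h' : (P n).1 = z := h
    have hvz : (P n).2 ≠ z := fun h2 => (hinv n).1.1 (h'.trans h2.symm)
    have : infDist z ({z}ᶜ : Set M) ≤ dist z (P n).2 :=
      infDist_le_dist_of_mem hvz
    have h2 := lt_of_lt_of_le (hinv n).2 (hbnd_z n)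
    rw [h'] at h2
    linarith
  · -- v n ≠ z
    intro n h
    have h' : (P n).2 = z := h
    have huz : (P n).1 ≠ z := fun h2 => (hinv n).1.1 (h2.trans h'.symm)
    have : infDist z ({z}ᶜ : Set M) ≤ dist z (P n).1 :=
      infDist_le_dist_of_mem huz
    have h2 := lt_of_lt_of_le (hinv n).2 (hbnd_z n)
    rw [dist_comm, h'] at h2
    linarith
  · -- disjointness
    have key : ∀ m n, m < n → (P n).1 ≠ (P m).1 ∧ (P n).1 ≠ (P m).2 ∧
        (P n).2 ≠ (P m).1 ∧ (P n).2 ≠ (P m).2 := by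
      intro m n hmn
      have hlt := lt_of_lt_of_le (hinv n).2 (hbnd_le n m hmn)
      have hu : dist (P n).1 (P n).2 < infDist (P m).1 ({(P m).1}ᶜ : Set M) :=
        lt_of_lt_of_le hlt (le_trans (min_le_right _ _) (min_le_left _ _))
      have hv : dist (P n).1 (P n).2 < infDist (P m).2 ({(P m).2}ᶜ : Set M) :=
        lt_of_lt_of_le hlt (le_trans (min_le_right _ _) (min_le_right _ _))
      have hne := (hinv n).1.1
      refine ⟨?_, ?_, ?_, ?_⟩
      · intro h
        have h2 : (P n).2 ≠ (P m).1 := fun hh => hne (h.trans hh.symm)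
        have hle := infDist_le_dist_of_mem (x := (P m).1) (s := ({(P m).1}ᶜ : Set M)) h2
        have heq : dist (P n).1 (P n).2 = dist (P m).1 (P n).2 := by rw [h]
        linarith
      · intro h
        have h2 : (P n).2 ≠ (P m).2 := fun hh => hne (h.trans hh.symm)
        have hle := infDist_le_dist_of_mem (x := (P m).2) (s := ({(P m).2}ᶜ : Set M)) h2
        have heq : dist (P n).1 (P n).2 = dist (P m).2 (P n).2 := by rw [h]
        linarith
      · intro h
        have h2 : (P n).1 ≠ (P m).1 := fun hh => hne (hh.trans h.symm)
        have hle := infDist_le_dist_of_mem (x := (P m).1) (s := ({(P m).1}ᶜ : Set M)) h2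
        have heq : dist (P n).1 (P n).2 = dist (P m).1 (P n).1 := by rw [h, dist_comm]
        linarith
      · intro h
        have h2 : (P n).1 ≠ (P m).2 := fun hh => hne (hh.trans h.symm)
        have hle := infDist_le_dist_of_mem (x := (P m).2) (s := ({(P m).2}ᶜ : Set M)) h2
        have heq : dist (P n).1 (P n).2 = dist (P m).2 (P n).1 := by rw [h, dist_comm]
        linarith
    intro m n hmn
    rcases Nat.lt_or_ge m n with h | h
    · obtain ⟨h1, h2, h3, h4⟩ := key m n h
      exact ⟨h1.symm, h3.symm, h4.symm⟩
    · have h' : n < m := lt_of_le_of_ne h (Ne.symm hmn)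
      obtain ⟨h1, h2, h3, h4⟩ := key n m h'
      exact ⟨h1, h2, h4⟩
  · exact fun n => (pred_facts hdisc _ (hinv n).1).2.2.2.1
  · intro n
    have := (pred_facts hdisc _ (hinv n).1).2.2.2.2.1
    show Apair (P n) - dist (P n).1 (P n).2 ≤ 0
    linarith
  · intro n; ring
  · exact fun n => (pred_facts hdisc _ (hinv n).1).2.2.2.2.2.1.le
  · intro n
    have := (pred_facts hdisc _ (hinv n).1).2.2.2.2.2.2.1
    show -(Apair (P n) - dist (P n).1 (P n).2) ≤ R2 (P n) (P n).2
    linarith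
  · intro m n hmn
    have hlt := lt_of_lt_of_le (hinv n).2 (hbnd_le n m hmn)
    have hM : dist (P n).1 (P n).2 < Marg (P m) := lt_of_lt_of_le hlt (min_le_left _ _)
    have h1 : Marg (P m) ≤ R2 (P m) (P m).1 - Apair (P m) := min_le_left _ _
    have h2 : Marg (P m) ≤ R2 (P m) (P m).2 - (dist (P m).1 (P m).2 - Apair (P m)) :=
      min_le_right _ _
    constructor
    · show _ + _ ≤ R2 (P m) (P m).1
      linarith
    · show _ + -(Apair (P m) - dist (P m).1 (P m).2) ≤ R2 (P m) (P m).2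
      linarith

end Chunk2
private lemma lipNorm_eq_of {F : M → ℝ} {c : ℝ}
    (hb : ∀ x y : M, x ≠ y → |F x - F y| ≤ c * dist x y)
    {x y : M} (hxy : x ≠ y) (heq : |F x - F y| = c * dist x y) :
    lipNorm F = c := by
  have hd : 0 < dist x y := dist_pos.2 hxy
  have hmem : c ∈ {r : ℝ | ∃ a b : M, a ≠ b ∧ r = |F a - F b| / dist a b} := by
    refine ⟨x, y, hxy, ?_⟩
    rw [heq, mul_div_assoc, div_self hd.ne', mul_one]
  have hub : ∀ r ∈ {r : ℝ | ∃ a b : M, a ≠ b ∧ r = |F a - F b| / dist a b}, r ≤ c := by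
    rintro r ⟨a, b, hab, rfl⟩
    rw [div_le_iff₀ (dist_pos.2 hab)]
    exact hb a b hab
  exact le_antisymm (csSup_le ⟨c, hmem⟩ hub) (le_csSup ⟨c, hub⟩ hmem)

end AuxSNA

/-- if `M` is an infinite complete metric space which is discrete but not
uniformly discrete, then `SNA(M)` contains an isometric copy of `c₀`. -/
theorem stmt9 {M : Type*} [MetricSpace M] [CompleteSpace M] [Infinite M] (z : M)
    (hdisc : ∀ x : M, ∃ r > (0 : ℝ), ball x r = {x})
    (hnud : ¬ UnifDiscreteOn (Set.univ : Set M)) :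
    ∃ f : ℕ → M → ℝ, (∀ n, f n z = 0 ∧ IsLipWith 1 (f n) ∧ lipNorm (f n) = 1) ∧
      ∀ l : ℕ → ℝ, Tendsto l atTop (𝓝 0) →
        IsLipWith (⨆ n, |l n|) (fun w => ∑' n, l n * f n w) ∧
        lipNorm (fun w => ∑' n, l n * f n w) = ⨆ n, |l n| ∧
        StronglyAttains (fun w => ∑' n, l n * f n w) := by
  classical
  obtain ⟨u, v, A, B, hne, huz, hvz, hdisj, hA0, hB0, hAB, hAle, hBle, hsep⟩ :=
    aux_main hdisc hnud z
  set D : ℕ → ℝ := fun n => dist (u n) (v n) with hD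
  have hDpos : ∀ n, 0 < D n := fun n => dist_pos.2 (hne n)
  set f : ℕ → M → ℝ := fun n w => if w = u n then A n else if w = v n then B n else 0 with hf
  have hfu : ∀ n, f n (u n) = A n := fun n => if_pos rfl
  have hfv : ∀ n, f n (v n) = B n := by
    intro n
    show (if v n = u n then A n else if v n = v n then B n else 0) = B n
    rw [if_neg (fun h => (hne n) h.symm), if_pos rfl]
  have hf0 : ∀ n w, w ≠ u n → w ≠ v n → f n w = 0 := by
    intro n w h1 h2
    show (if w = u n then A n else if w = v n then B n else 0) = 0
    rw [if_neg h1, if_neg h2]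
  set Mem : M → ℕ → Prop := fun w n => w = u n ∨ w = v n with hMem
  have hMuniq : ∀ w m n, Mem w m → Mem w n → m = n := by
    intro w m n hm hn
    by_contra hmn
    obtain ⟨h1, h2, h3⟩ := hdisj m n hmn
    obtain ⟨-, h4, -⟩ := hdisj n m (Ne.symm hmn)
    rcases hm with rfl | rfl
    · rcases hn with h | h
      · exact h1 h
      · exact h2 h
    · rcases hn with h | h
      · exact h4 h.symm
      · exact h3 h
  have hkey : ∀ n w y, y ≠ u n → y ≠ v n → |f n w| ≤ dist w y := by
    intro n w y hy1 hy2
    have hyC : y ∈ (({u n, v n} : Set M)ᶜ) := by simp [hy1, hy2]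
    by_cases h1 : w = u n
    · subst h1
      rw [hfu, abs_of_nonneg (hA0 n)]
      exact le_trans (hAle n) (infDist_le_dist_of_mem hyC)
    · by_cases h2 : w = v n
      · subst h2
        rw [hfv, abs_of_nonpos (hB0 n)]
        exact le_trans (hBle n) (infDist_le_dist_of_mem hyC)
      · rw [hf0 n w h1 h2]
        simpa using dist_nonneg
  have hDle : ∀ n w, |f n w| ≤ D n := by
    intro n w
    by_cases h1 : w = u n
    · subst h1; rw [hfu, abs_of_nonneg (hA0 n)]
      have := hAB n; have := hB0 n; linarith
    · by_cases h2 : w = v n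
      · subst h2; rw [hfv, abs_of_nonpos (hB0 n)]
        have := hAB n; have := hA0 n; linarith
      · rw [hf0 n w h1 h2]; simpa using (hDpos n).le
  have hmarg : ∀ m n w y, m < n → Mem y m → w ≠ u m → w ≠ v m → D n + |f m y| ≤ dist w y := by
    intro m n w y hmn hym hw1 hw2
    have hwC : w ∈ (({u m, v m} : Set M)ᶜ) := by simp [hw1, hw2]
    rcases hym with rfl | rfl
    · rw [hfu, abs_of_nonneg (hA0 m)]
      calc D n + A m ≤ infDist (u m) (({u m, v m} : Set M)ᶜ) := (hsep m n hmn).1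
      _ ≤ dist (u m) w := infDist_le_dist_of_mem hwC
      _ = dist w (u m) := dist_comm _ _
    · rw [hfv, abs_of_nonpos (hB0 m)]
      calc D n + -(B m) ≤ infDist (v m) (({u m, v m} : Set M)ᶜ) := (hsep m n hmn).2
      _ ≤ dist (v m) w := infDist_le_dist_of_mem hwC
      _ = dist w (v m) := dist_comm _ _
  have hfz : ∀ n, f n z = 0 := fun n => hf0 n z (fun h => huz n h.symm) (fun h => hvz n h.symm)
  have hgmem : ∀ (l : ℕ → ℝ) n w, Mem w n → (∑' k, l k * f k w) = l n * f n w := by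
    intro l n w hw
    apply tsum_eq_single
    intro m hm
    have hzero : f m w = 0 := by
      apply hf0
      · exact fun h => hm (hMuniq w m n (Or.inl h) hw)
      · exact fun h => hm (hMuniq w m n (Or.inr h) hw)
    rw [hzero, mul_zero]
  have hg0 : ∀ (l : ℕ → ℝ) w, (∀ n, ¬ Mem w n) → (∑' k, l k * f k w) = 0 := by
    intro l w hw
    have hz : ∀ k, l k * f k w = 0 := fun k => by
      rw [hf0 k w (fun h => hw k (Or.inl h)) (fun h => hw k (Or.inr h)), mul_zero]
    rw [tsum_congr hz, tsum_zero]
  have hest : ∀ (l : ℕ → ℝ) (L : ℝ), (∀ n, |l n| ≤ L) → ∀ x y : M, x ≠ y →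
      |(∑' k, l k * f k x) - (∑' k, l k * f k y)| ≤ L * dist x y := by
    intro l L hL x y hxy
    have hL0 : 0 ≤ L := le_trans (abs_nonneg _) (hL 0)
    have hcross : ∀ n m a b, m < n → Mem a n → Mem b m → a ≠ b →
        |(∑' k, l k * f k a) - (∑' k, l k * f k b)| ≤ L * dist a b := by
      intro n m a b hmn han hbm hab
      rw [hgmem l n a han, hgmem l m b hbm]
      have ha1 : a ≠ u m := fun h => absurd (hMuniq a n m han (Or.inl h)) (by omega)
      have ha2 : a ≠ v m := fun h => absurd (hMuniq a n m han (Or.inr h)) (by omega)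
      have h3 : D n + |f m b| ≤ dist a b := hmarg m n a b hmn hbm ha1 ha2
      have h2 : |f n a| ≤ D n := hDle n a
      calc |l n * f n a - l m * f m b| ≤ |l n * f n a| + |l m * f m b| := abs_sub _ _
      _ = |l n| * |f n a| + |l m| * |f m b| := by rw [abs_mul, abs_mul]
      _ ≤ L * |f n a| + L * |f m b| :=
          add_le_add (mul_le_mul_of_nonneg_right (hL n) (abs_nonneg _))
            (mul_le_mul_of_nonneg_right (hL m) (abs_nonneg _))
      _ = L * (|f n a| + |f m b|) := by ring
      _ ≤ L * (D n + |f m b|) := by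
          apply mul_le_mul_of_nonneg_left (by linarith) hL0
      _ ≤ L * dist a b := mul_le_mul_of_nonneg_left h3 hL0
    by_cases hx : ∃ n, Mem x n
    · obtain ⟨n, hxn⟩ := hx
      by_cases hy : ∃ m, Mem y m
      · obtain ⟨m, hym⟩ := hy
        rcases lt_trichotomy m n with h | h | h
        · exact hcross n m x y h hxn hym hxy
        · subst h
          rw [hgmem l m x hxn, hgmem l m y hym, ← mul_sub, abs_mul]
          have hdle : |f m x - f m y| ≤ dist x y := by
            rcases hxn with rfl | rfl <;> rcases hym with h' | h'
            · exact absurd h'.symm hxy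
            · subst h'
              rw [hfu, hfv, hAB m, abs_of_pos (hDpos m)]
            · subst h'
              rw [hfv, hfu, abs_sub_comm, hAB m, abs_of_pos (hDpos m), hD]
              rw [dist_comm]
            · exact absurd h'.symm hxy
          exact mul_le_mul (hL m) hdle (abs_nonneg _) hL0
        · have := hcross m n y x h hym hxn (Ne.symm hxy)
          rwa [abs_sub_comm, dist_comm] at this
      · push_neg at hy
        rw [hgmem l n x hxn, hg0 l y hy, sub_zero, abs_mul]
        exact mul_le_mul (hL n) (hkey n x y (fun h => hy n (Or.inl h)) (fun h => hy n (Or.inr h)))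
          (abs_nonneg _) hL0
    · push_neg at hx
      by_cases hy : ∃ m, Mem y m
      · obtain ⟨m, hym⟩ := hy
        rw [hg0 l x hx, hgmem l m y hym, zero_sub, abs_neg, abs_mul, dist_comm]
        exact mul_le_mul (hL m) (hkey m y x (fun h => hx m (Or.inl h)) (fun h => hx m (Or.inr h)))
          (abs_nonneg _) hL0
      · push_neg at hy
        rw [hg0 l x hx, hg0 l y hy, sub_self, abs_zero]
        positivity
  refine ⟨f, ?_, ?_⟩
  · intro n
    have hlip : IsLipWith 1 (f n) := by
      set l : ℕ → ℝ := fun k => if k = n then (1:ℝ) else 0 with hl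
      have hlb : ∀ k, |l k| ≤ 1 := by
        intro k; by_cases h : k = n <;> simp [hl, h]
      have heval : ∀ w, (∑' k, l k * f k w) = f n w := by
        intro w
        rw [tsum_eq_single n (fun m hm => by simp [hl, if_neg hm])]
        simp [hl]
      intro x y
      by_cases hxy : x = y
      · subst hxy; simp
      · have := hest l 1 hlb x y hxy
        rwa [heval, heval] at this
    refine ⟨hfz n, hlip, ?_⟩
    refine lipNorm_eq_of (fun x y hxy => hlip x y) (hne n) ?_
    rw [hfu, hfv, hAB n, abs_of_pos (hDpos n), one_mul]
  · intro l hl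
    set L : ℝ := ⨆ k, |l k| with hLdef
    have hbdd : BddAbove (Set.range fun k => |l k|) := by
      have habs : Tendsto (fun k => |l k|) atTop (𝓝 0) := by simpa using hl.abs
      exact habs.bddAbove_range
    have hLub : ∀ k, |l k| ≤ L := fun k => le_ciSup hbdd k
    have hL0 : 0 ≤ L := le_trans (abs_nonneg _) (hLub 0)
    have hlip : IsLipWith L (fun w => ∑' k, l k * f k w) := by
      intro x y
      by_cases hxy : x = y
      · subst hxy; simp
      · exact hest l L hLub x y hxy
    by_cases hLpos : 0 < L
    · obtain ⟨n0, hn0⟩ : ∃ n0, |l n0| = L := by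
        obtain ⟨N, hN⟩ := Metric.tendsto_atTop.1 hl (L/2) (by linarith)
        obtain ⟨n0, -, hmax⟩ := Finset.exists_max_image (Finset.range (N+1))
          (fun k => |l k|) ⟨0, by simp⟩
        refine ⟨n0, le_antisymm (hLub n0) ?_⟩
        have hall : ∀ k, |l k| ≤ max (|l n0|) (L/2) := by
          intro k
          rcases le_or_gt k N with h | h
          · exact le_max_of_le_left (hmax k (Finset.mem_range.2 (by omega)))
          · have := hN k (by omega)
            rw [Real.dist_eq, sub_zero] at this
            exact le_max_of_le_right this.le
        have hle2 : L ≤ max (|l n0|) (L/2) := ciSup_le hall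
        rcases le_or_gt (L/2) (|l n0|) with h | h
        · rwa [max_eq_left h] at hle2
        · rw [max_eq_right h.le] at hle2; linarith
      have hweq : |(∑' k, l k * f k (u n0)) - (∑' k, l k * f k (v n0))| =
          L * dist (u n0) (v n0) := by
        rw [hgmem l n0 (u n0) (Or.inl rfl), hgmem l n0 (v n0) (Or.inr rfl), hfu, hfv, ← mul_sub,
          abs_mul, hAB n0, hn0, abs_of_pos (hDpos n0)]
      have hln : lipNorm (fun w => ∑' k, l k * f k w) = L :=
        lipNorm_eq_of (fun x y hxy => hest l L hLub x y hxy) (hne n0) hweq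
      refine ⟨hlip, hln, ?_⟩
      rcases le_or_gt 0 (l n0) with hsgn | hsgn
      · have hl0 : l n0 = L := by rwa [abs_of_nonneg hsgn] at hn0
        refine ⟨u n0, v n0, hne n0, ?_⟩
        beta_reduce
        rw [hln, hgmem l n0 (u n0) (Or.inl rfl), hgmem l n0 (v n0) (Or.inr rfl), hfu, hfv,
          ← mul_sub, hAB n0]
        rw [mul_div_assoc, div_self (hDpos n0).ne', mul_one, hl0]
      · have hl0 : l n0 = -L := by rw [abs_of_neg hsgn] at hn0; linarith
        refine ⟨v n0, u n0, Ne.symm (hne n0), ?_⟩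
        beta_reduce
        rw [hln, hgmem l n0 (v n0) (Or.inr rfl), hgmem l n0 (u n0) (Or.inl rfl), hfv, hfu,
          ← mul_sub]
        have hBA : B n0 - A n0 = -(D n0) := by have := hAB n0; linarith
        rw [hBA, dist_comm, hl0, mul_neg, neg_mul, neg_neg, mul_div_assoc,
          div_self (hDpos n0).ne', mul_one]
    · have hLeq : L = 0 := le_antisymm (not_lt.1 hLpos) hL0
      have hlz : ∀ k, l k = 0 := fun k =>
        abs_eq_zero.1 (le_antisymm (hLeq ▸ hLub k) (abs_nonneg _))
      have hgz : ∀ w, (∑' k, l k * f k w) = 0 := fun w => by simp [hlz]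
      obtain ⟨x, y, hxy⟩ := exists_pair_ne M
      have hln : lipNorm (fun w => ∑' k, l k * f k w) = L := by
        rw [hLeq]
        refine lipNorm_eq_of (fun a b hab => ?_) hxy ?_
        · rw [hgz, hgz, sub_self, abs_zero, zero_mul]
        · rw [hgz, hgz, sub_self, abs_zero, zero_mul]
      refine ⟨hlip, hln, x, y, hxy, ?_⟩
      beta_reduce
      rw [hln, hgz, hgz, sub_self, zero_div, hLeq]
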